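/- Let x = (x_1,...,x_n) be a vector of nonnegative integers and suppose x_i > x_{i+1} for some 1 ≤ i ≤ n-1. Let x' be obtained from x by replacing x_i with x_{i+1}. Then the set of x-dominated paths ending at (x_n, n) equals the set of x'-dominated paths ending at (x_n, n); in particular ψ(x) = ψ(x'). -/

import Mathlib

/-- A monotone lattice path, encoded as a list of steps (`true` = up, `false` = right),
is an `x`-dominated path ending at `(x n, n)` if it has `n` up-steps, `x n` right-steps,
and every vertex `(i, j)` on it with `j < n` satisfies `i ≤ x (j+1)`. -/
def Dominated (n : ℕ) (x : ℕ → ℕ) (s : List Bool) : Prop :=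
  s.count true = n ∧ s.count false = x n ∧
    ∀ k, (s.take k).count true < n →
      (s.take k).count false ≤ x ((s.take k).count true + 1)

/-- `psi n x` is the number of `x`-dominated monotone lattice paths from `(0,0)` to `(x n, n)`. -/
noncomputable def psi (n : ℕ) (x : ℕ → ℕ) : ℕ :=
  Set.ncard {s : List Bool | Dominated n x s}

/-- If `x_i > x_{i+1}` for some `1 ≤ i ≤ n - 1`, and `x'` is obtained from `x` by
replacing `x_i` with `x_{i+1}`, then the `x`-dominated paths ending at `(x_n, n)` are
exactly the `x'`-dominated ones; in particular `ψ(x) = ψ(x')`. -/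
theorem stmt_4 (n : ℕ) (x : ℕ → ℕ) (i : ℕ) (hi1 : 1 ≤ i) (hin : i ≤ n - 1)
    (hgt : x (i + 1) < x i) :
    {s : List Bool | Dominated n x s} =
        {s : List Bool | Dominated n (Function.update x i (x (i + 1))) s} ∧
      psi n x = psi n (Function.update x i (x (i + 1))) := by
  have hi_lt_n : i < n := by omega
  have mono : ∀ (s : List Bool) (c : Bool) (a b : ℕ), a ≤ b →
      (s.take a).count c ≤ (s.take b).count c := by
    intro s c a b hab
    have : s.take a = (s.take b).take a := by
      rw [List.take_take, Nat.min_eq_left hab]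
    rw [this]
    exact List.Sublist.count_le c (List.take_sublist _ _)
  have step : ∀ (s : List Bool) (c : Bool) (m : ℕ),
      (s.take (m + 1)).count c ≤ (s.take m).count c + 1 := by
    intro s c m
    rw [List.take_succ, List.count_append]
    have : (s[m]?).toList.count c ≤ 1 := by
      rcases h : s[m]? with _ | b
      · simp
      · simp [List.count_cons]; split <;> simp
    omega
  have hset : {s : List Bool | Dominated n x s} =
      {s : List Bool | Dominated n (Function.update x i (x (i + 1))) s} := by
    ext s
    simp only [Set.mem_setOf_eq, Dominated]
    have hxn : Function.update x i (x (i + 1)) n = x n := by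
      rw [Function.update_of_ne (by omega)]
    constructor
    · rintro ⟨h1, h2, h3⟩
      refine ⟨h1, by rw [hxn]; exact h2, ?_⟩
      intro k hk
      by_cases hci : (s.take k).count true + 1 = i
      · rw [hci, Function.update_self]
        -- find minimal k' with count true (take k') ≥ i
        have hex : ∃ m, i ≤ (s.take m).count true := by
          refine ⟨s.length, ?_⟩
          rw [List.take_length, h1]; exact hi_lt_n.le
        set k' := Nat.find hex with hk'def
        have hspec : i ≤ (s.take k').count true := Nat.find_spec hex
        have hk'pos : 1 ≤ k' := by
          rcases Nat.eq_zero_or_pos k' with h0 | h0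
          · exfalso; rw [h0] at hspec; simp at hspec; omega
          · exact h0
        have hmin : (s.take (k' - 1)).count true < i := by
          have := Nat.find_min hex (m := k' - 1) (by omega)
          omega
        have heq : (s.take k').count true = i := by
          have := step s true (k' - 1)
          have hrw : k' - 1 + 1 = k' := by omega
          rw [hrw] at this
          omega
        have hkle : k ≤ k' := by
          by_contra hlt
          have := mono s true k' k (by omega)
          omega
        have := h3 k' (by rw [heq]; exact hi_lt_n)
        rw [heq] at this
        calc (s.take k).count false ≤ (s.take k').count false := mono s false k k' hkle
          _ ≤ x (i + 1) := this
      · rw [Function.update_of_ne hci]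
        exact h3 k hk
    · rintro ⟨h1, h2, h3⟩
      refine ⟨h1, by rw [hxn] at h2; exact h2, ?_⟩
      intro k hk
      have := h3 k hk
      by_cases hci : (s.take k).count true + 1 = i
      · rw [hci, Function.update_self] at this
        rw [hci]
        exact this.trans hgt.le
      · rwa [Function.update_of_ne hci] at this
  exact ⟨hset, by unfold psi; rw [hset]⟩
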